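/- Let n, k ≥ 1. For each a ∈ {1, …, n} and b ∈ {1, …, k}, let T_{a,b}: ℝ → ℝ be differentiable functions such that for each fixed a, the derivatives T_{a,1}', …, T_{a,k}' admit no nontrivial vanishing linear combination: if β ∈ ℝ^k satisfies ∑_{b=1}^k β_b T_{a,b}'(t) = 0 for all t ∈ ℝ, then β = 0. Let D be an nk × nk array of real coefficients indexed by (i, l, a, b), and suppose there are functions T̄_{i,l}: ℝ → ℝ such that for all z = (z₁, …, zₙ) ∈ ℝⁿ and all (i, l): T̄_{i,l}(z_i) = ∑_{a=1}^n ∑_{b=1}^k D_{i,l,a,b} T_{a,b}(z_a). Then D_{i,l,s,b} = 0 whenever s ≠ i; that is, D, viewed as an nk × nk matrix with k × k blocks indexed by (i, a), is block diagonal. -/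

import Mathlib

/-- **Lemma: the linear indeterminacy between two pointwise families of sufficient statistics
is block diagonal.**  If each univariate function `T̄_{i,l}` of `z_i` equals the linear
combination `∑_{a,b} D_{i,l,a,b} T_{a,b}(z_a)` for all `z ∈ ℝⁿ`, and for each `a` the
derivatives `T_{a,1}', …, T_{a,k}'` admit no nontrivial vanishing linear combination, then
`D_{i,l,s,b} = 0` whenever `s ≠ i`. -/
theorem coeffs_vanish_off_block_diagonal
    (n k : ℕ) (hn : 1 ≤ n) (hk : 1 ≤ k)
    (T : Fin n → Fin k → ℝ → ℝ)
    (hdiff : ∀ a b, Differentiable ℝ (T a b))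
    (hindep : ∀ (a : Fin n) (β : Fin k → ℝ),
      (∀ t : ℝ, ∑ b, β b * deriv (T a b) t = 0) → β = 0)
    (D : Fin n → Fin k → Fin n → Fin k → ℝ)
    (Tbar : Fin n → Fin k → ℝ → ℝ)
    (h : ∀ (z : Fin n → ℝ) (i : Fin n) (l : Fin k),
      Tbar i l (z i) = ∑ a, ∑ b, D i l a b * T a b (z a)) :
    ∀ (i : Fin n) (l : Fin k) (s : Fin n) (b : Fin k), s ≠ i → D i l s b = 0 := by
  intro i l s b hsi
  set β : Fin k → ℝ := fun b => D i l s b with hβ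
  set C : ℝ := Tbar i l 0 - ∑ a ∈ Finset.univ.erase s, ∑ b, D i l a b * T a b 0 with hC
  have key : ∀ t : ℝ, ∑ b, β b * T s b t = C := by
    intro t
    have hz := h (Function.update (fun _ => (0 : ℝ)) s t) i l
    rw [Function.update_of_ne (Ne.symm hsi)] at hz
    rw [← Finset.add_sum_erase _ _ (Finset.mem_univ s)] at hz
    have hrest : ∑ a ∈ Finset.univ.erase s, ∑ b,
        D i l a b * T a b (Function.update (fun _ => (0 : ℝ)) s t a)
        = ∑ a ∈ Finset.univ.erase s, ∑ b, D i l a b * T a b 0 := by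
      refine Finset.sum_congr rfl fun a ha => ?_
      rw [Function.update_of_ne (Finset.ne_of_mem_erase ha)]
    rw [hrest, Function.update_self] at hz
    rw [hC]
    linarith [hz]
  have hderiv : ∀ t : ℝ, HasDerivAt (fun t => ∑ b, β b * T s b t)
      (∑ b, β b * deriv (T s b) t) t := by
    intro t
    exact HasDerivAt.fun_sum fun b _ => ((hdiff s b t).hasDerivAt).const_mul (β b)
  have hzero : ∀ t : ℝ, ∑ b, β b * deriv (T s b) t = 0 := by
    intro t
    have h1 := (hderiv t).deriv
    have h2 : (fun t => ∑ b, β b * T s b t) = fun _ => C := funext key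
    rw [h2, deriv_const] at h1
    exact h1.symm
  have := congrFun (hindep s β hzero) b
  simpa [hβ] using this
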